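/- Let κ > 0, φ > 0 and ν > 4, and set γ_k = (2^k · ν(ν−1)⋯(ν−k+1))^{−1} = (2^k ∏_{i=0}^{k−1}(ν−i))^{−1}. Then for every h = (h₁,h₂) ∈ ℝ² with h ≠ 0, the fourth partial derivative of the Matérn covariance function with respect to the first coordinate satisfies ∂⁴C_κ^ν/∂h₁⁴ (h) = 3γ₂·C_κ^{ν−2}(h) − 6γ₃·h₁²·C_κ^{ν−3}(h) + γ₄·h₁⁴·C_κ^{ν−4}(h). (This is the covariance function of Example 3 with b₁ = b₂ = 0 and B₁ = B₂ = (1,0)^⊤: applying the operator (−∂₁²)(−∂₁²) = ∂₁⁴ to the Matérn covariance yields the stated oscillating covariance function.) -/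

import Mathlib

open Real

/-- The modified Bessel function of the second kind,
`K_ν(x) = ∫₀^∞ exp(−x cosh t) cosh(νt) dt`. -/
noncomputable def besselK (ν x : ℝ) : ℝ :=
  ∫ t in Set.Ioi (0 : ℝ), Real.exp (-x * Real.cosh t) * Real.cosh (ν * t)

/-- The Matérn covariance function on `ℝ²` with scale `κ`, variance parameter `φ²` and
shape parameter `ν`:
`C_κ^ν(h) = (2^{1−ν}φ²/(4π Γ(ν+1) κ^{2ν})) (κ‖h‖)^ν K_ν(κ‖h‖)`. -/
noncomputable def matern (κ φ ν : ℝ) (h : EuclideanSpace ℝ (Fin 2)) : ℝ :=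
  2 ^ (1 - ν) * φ ^ 2 / (4 * π * Real.Gamma (ν + 1) * κ ^ (2 * ν)) *
    (κ * ‖h‖) ^ ν * besselK ν (κ * ‖h‖)

/-- The partial derivative of `g : ℝ² → ℝ` in the `i`-th coordinate direction. -/
noncomputable def pderiv2 (i : Fin 2) (g : EuclideanSpace ℝ (Fin 2) → ℝ) :
    EuclideanSpace ℝ (Fin 2) → ℝ :=
  fun x => fderiv ℝ g x (EuclideanSpace.single i 1)


open MeasureTheory Set Filter

notation "E2" => EuclideanSpace ℝ (Fin 2)

lemma exp_quad_integrable (c d : ℝ) (hd : 0 < d) :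
    Integrable (fun t : ℝ => Real.exp (c * t - d * t ^ 2)) := by
  have h : ∀ t : ℝ, c * t - d * t ^ 2 = c ^ 2 / (4 * d) + -(d * (t - c / (2 * d)) ^ 2) := by
    intro t; field_simp; ring
  simp_rw [h, Real.exp_add]
  apply Integrable.const_mul
  have base : Integrable (fun t : ℝ => Real.exp (-d * t ^ 2)) := integrable_exp_neg_mul_sq hd
  have := base.comp_sub_right (c / (2 * d))
  simpa [neg_mul] using this

lemma master_integrable (a b : ℝ) (ha : 0 < a) :
    IntegrableOn (fun t : ℝ => Real.exp (b * t - a * Real.cosh t)) (Set.Ioi 0) := by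
  have key : Integrable (fun t : ℝ =>
      Real.exp (-(a/2)) * Real.exp ((b - a/2) * t - (a/4) * t ^ 2)) :=
    (exp_quad_integrable _ _ (by positivity)).const_mul _
  refine Integrable.mono' key.integrableOn ?_ ?_
  · exact (Continuous.aestronglyMeasurable (by continuity))
  · refine (ae_restrict_iff' measurableSet_Ioi).2 (ae_of_all _ fun t ht => ?_)
    rw [Real.norm_eq_abs, abs_of_pos (Real.exp_pos _), ← Real.exp_add]
    apply Real.exp_le_exp.2
    have h1 : 1 + t + t ^ 2 / 2 ≤ Real.exp t := Real.quadratic_le_exp_of_nonneg (le_of_lt ht)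
    have h2 : Real.cosh t = (Real.exp t + Real.exp (-t)) / 2 := Real.cosh_eq t
    have h3 : 0 < Real.exp (-t) := Real.exp_pos _
    nlinarith [ha]

lemma cosh_le_exp_abs (u : ℝ) : Real.cosh u ≤ Real.exp |u| := by
  rw [← Real.cosh_abs, Real.cosh_eq]
  have h1 : Real.exp (-|u|) ≤ Real.exp |u| := Real.exp_le_exp.2 (by linarith [abs_nonneg u])
  linarith

lemma cosh_mul_le (b t : ℝ) (ht : 0 ≤ t) : Real.cosh (b * t) ≤ Real.exp (|b| * t) := by
  have := cosh_le_exp_abs (b * t)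
  rwa [abs_mul, abs_of_nonneg ht] at this

lemma integrable_K (x b : ℝ) (hx : 0 < x) :
    IntegrableOn (fun t : ℝ => Real.exp (-x * Real.cosh t) * Real.cosh (b * t)) (Set.Ioi 0) := by
  refine Integrable.mono' (master_integrable x |b| hx) ?_ ?_
  · exact Continuous.aestronglyMeasurable (by continuity)
  · refine (ae_restrict_iff' measurableSet_Ioi).2 (ae_of_all _ fun t ht => ?_)
    have h1 : 0 < Real.exp (-x * Real.cosh t) := Real.exp_pos _
    have h2 : 0 < Real.cosh (b * t) := Real.cosh_pos _
    rw [Real.norm_eq_abs, abs_of_pos (by positivity), ← Real.exp_log h2, ← Real.exp_add]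
    apply Real.exp_le_exp.2
    have h3 : Real.log (Real.cosh (b * t)) ≤ |b| * t := by
      have := Real.log_le_log h2 (cosh_mul_le b t (le_of_lt ht))
      simpa [Real.log_exp] using this
    linarith

lemma integrable_K' (x b : ℝ) (hx : 0 < x) :
    IntegrableOn (fun t : ℝ => Real.cosh t * (Real.exp (-x * Real.cosh t) * Real.cosh (b * t)))
      (Set.Ioi 0) := by
  refine Integrable.mono' (master_integrable x (1 + |b|) hx) ?_ ?_
  · exact Continuous.aestronglyMeasurable (by continuity)
  · refine (ae_restrict_iff' measurableSet_Ioi).2 (ae_of_all _ fun t ht => ?_)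
    have h1 : 0 < Real.exp (-x * Real.cosh t) := Real.exp_pos _
    have h2 : 0 < Real.cosh (b * t) := Real.cosh_pos _
    have h4 : (0:ℝ) < Real.cosh t := Real.cosh_pos _
    rw [Real.norm_eq_abs, abs_of_pos (by positivity)]
    have h5 : Real.cosh t ≤ Real.exp (1 * t) := by
      simpa using cosh_mul_le 1 t (le_of_lt ht)
    have h6 : Real.cosh (b * t) ≤ Real.exp (|b| * t) := cosh_mul_le b t (le_of_lt ht)
    calc Real.cosh t * (Real.exp (-x * Real.cosh t) * Real.cosh (b * t))
        ≤ Real.exp (1 * t) * (Real.exp (-x * Real.cosh t) * Real.exp (|b| * t)) := by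
          apply mul_le_mul h5 (mul_le_mul_of_nonneg_left h6 (le_of_lt h1)) (by positivity)
            (by positivity)
      _ = Real.exp ((1 + |b|) * t - x * Real.cosh t) := by
          rw [← Real.exp_add, ← Real.exp_add]; ring_nf

lemma integrable_K'' (x b : ℝ) (hx : 0 < x) :
    IntegrableOn (fun t : ℝ => Real.sinh t * (Real.exp (-x * Real.cosh t) * Real.sinh (b * t)))
      (Set.Ioi 0) := by
  refine Integrable.mono' (master_integrable x (1 + |b|) hx) ?_ ?_
  · exact Continuous.aestronglyMeasurable (by continuity)
  · refine (ae_restrict_iff' measurableSet_Ioi).2 (ae_of_all _ fun t ht => ?_)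
    have h1 : 0 < Real.exp (-x * Real.cosh t) := Real.exp_pos _
    have habs : ∀ u : ℝ, |Real.sinh u| ≤ Real.cosh u := by
      intro u
      rw [Real.abs_sinh, ← Real.cosh_abs, Real.sinh_eq, Real.cosh_eq]
      have := Real.exp_pos (-|u|)
      linarith
    have h4 : (0:ℝ) < Real.cosh t := Real.cosh_pos _
    have h2 : (0:ℝ) < Real.cosh (b * t) := Real.cosh_pos _
    have h5 : Real.cosh t ≤ Real.exp (1 * t) := by
      simpa using cosh_mul_le 1 t (le_of_lt ht)
    have h6 : Real.cosh (b * t) ≤ Real.exp (|b| * t) := cosh_mul_le b t (le_of_lt ht)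
    rw [Real.norm_eq_abs, abs_mul, abs_mul, abs_of_pos h1]
    calc |Real.sinh t| * (Real.exp (-x * Real.cosh t) * |Real.sinh (b * t)|)
        ≤ Real.cosh t * (Real.exp (-x * Real.cosh t) * Real.cosh (b * t)) := by
          apply mul_le_mul (habs t)
            (mul_le_mul_of_nonneg_left (habs (b*t)) (le_of_lt h1)) (by positivity) (by positivity)
      _ ≤ Real.exp (1 * t) * (Real.exp (-x * Real.cosh t) * Real.exp (|b| * t)) := by
          apply mul_le_mul h5 (mul_le_mul_of_nonneg_left h6 (le_of_lt h1)) (by positivity)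
            (by positivity)
      _ = Real.exp ((1 + |b|) * t - x * Real.cosh t) := by
          rw [← Real.exp_add, ← Real.exp_add]; ring_nf

lemma besselK_hasDerivAt (ν x : ℝ) (hx : 0 < x) :
    HasDerivAt (besselK ν) (-((besselK (ν+1) x + besselK (ν-1) x) / 2)) x := by
  have hε : (0:ℝ) < x / 2 := by linarith
  set F : ℝ → ℝ → ℝ := fun y t => Real.exp (-y * Real.cosh t) * Real.cosh (ν * t) with hF
  set F' : ℝ → ℝ → ℝ :=
    fun y t => -(Real.cosh t * (Real.exp (-y * Real.cosh t) * Real.cosh (ν * t))) with hF'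
  have main := hasDerivAt_integral_of_dominated_loc_of_deriv_le (μ := volume.restrict (Ioi 0))
      (F := F) (F' := F') (x₀ := x)
      (bound := fun t => Real.cosh t * (Real.exp (-(x/2) * Real.cosh t) * Real.cosh (ν * t)))
      (Metric.ball_mem_nhds x hε) ?_ ?_ ?_ ?_ ?_ ?_
  · -- conclude
    have h2 := main.2
    have hint : (∫ t in Set.Ioi (0:ℝ), F' x t)
        = -((besselK (ν+1) x + besselK (ν-1) x) / 2) := by
      have hid : ∀ t : ℝ, F' x t
          = -(1/2) * (Real.exp (-x * Real.cosh t) * Real.cosh ((ν+1) * t))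
            + -(1/2) * (Real.exp (-x * Real.cosh t) * Real.cosh ((ν-1) * t)) := by
        intro t
        have e1 : Real.cosh ((ν+1) * t) = Real.cosh (ν*t) * Real.cosh t
            + Real.sinh (ν*t) * Real.sinh t := by
          rw [show (ν+1)*t = ν*t + t by ring, Real.cosh_add]
        have e2 : Real.cosh ((ν-1) * t) = Real.cosh (ν*t) * Real.cosh t
            - Real.sinh (ν*t) * Real.sinh t := by
          rw [show (ν-1)*t = ν*t - t by ring, Real.cosh_sub]
        simp only [hF']
        rw [e1, e2]; ring
      rw [MeasureTheory.integral_congr_ae (ae_of_all _ hid),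
        MeasureTheory.integral_add (((integrable_K x (ν+1) hx)).const_mul _)
          (((integrable_K x (ν-1) hx)).const_mul _),
        integral_const_mul, integral_const_mul]
      simp only [besselK]; ring
    rw [hint] at h2
    exact h2
  · exact Eventually.of_forall fun y => Continuous.aestronglyMeasurable (by continuity)
  · exact integrable_K x ν hx
  · exact Continuous.aestronglyMeasurable (by continuity)
  · refine (ae_restrict_iff' measurableSet_Ioi).2 (ae_of_all _ fun t ht => fun y hy => ?_)
    have hy2 : x/2 < y := by
      have := abs_lt.1 (Metric.mem_ball.1 hy |> fun h => by
        simpa [Real.dist_eq] using h)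
      linarith [this.1]
    have h1 : 0 < Real.cosh t := Real.cosh_pos _
    have h2 : 0 < Real.cosh (ν * t) := Real.cosh_pos _
    rw [Real.norm_eq_abs, abs_neg, abs_of_pos (by positivity)]
    have : Real.exp (-y * Real.cosh t) ≤ Real.exp (-(x/2) * Real.cosh t) := by
      apply Real.exp_le_exp.2; nlinarith
    nlinarith [this, h1.le, h2.le, mul_le_mul_of_nonneg_left this (le_of_lt h2)]
  · exact integrable_K' (x/2) ν hε
  · refine ae_of_all _ fun t => fun y hy => ?_
    have hd : HasDerivAt (fun y : ℝ => -y * Real.cosh t) (-Real.cosh t) y := by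
      simpa using (hasDerivAt_id y).neg.mul_const (Real.cosh t)
    have := (hd.exp).mul_const (Real.cosh (ν * t))
    refine this.congr_deriv ?_
    simp only [hF']; ring

lemma tendsto_exp_lin_cosh (a b : ℝ) (ha : 0 < a) :
    Tendsto (fun t : ℝ => Real.exp (b * t - a * Real.cosh t)) atTop (nhds 0) := by
  apply Real.tendsto_exp_atBot.comp
  have hub : Tendsto (fun t : ℝ => -a + t * (b - (a/4) * t)) atTop atBot := by
    apply tendsto_atBot_add_const_left
    apply Tendsto.atTop_mul_atBot₀ tendsto_id
    have hn : Tendsto (fun t : ℝ => -((a/4) * t)) atTop atBot :=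
      tendsto_neg_atTop_atBot.comp (tendsto_id.const_mul_atTop (by positivity : (0:ℝ) < a/4))
    have := tendsto_atBot_add_const_left atTop b hn
    simpa [sub_eq_add_neg] using this
  refine tendsto_atBot_mono' atTop ?_ hub
  filter_upwards [eventually_ge_atTop (0:ℝ)] with t ht
  have h1 : 1 + t + t ^ 2 / 2 ≤ Real.exp t := Real.quadratic_le_exp_of_nonneg ht
  have h2 : Real.cosh t = (Real.exp t + Real.exp (-t)) / 2 := Real.cosh_eq t
  have h3 : 1 + (-t) ≤ Real.exp (-t) := by linarith [Real.add_one_le_exp (-t)]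
  have hcosh : 1 + t ^ 2 / 4 ≤ Real.cosh t := by nlinarith
  nlinarith [mul_le_mul_of_nonneg_left hcosh ha.le]

lemma besselK_recurrence (ν x : ℝ) (hx : 0 < x) :
    besselK (ν+1) x - besselK (ν-1) x = (2*ν/x) * besselK ν x := by
  set F : ℝ → ℝ := fun t => (-2/x) * (Real.exp (-x * Real.cosh t) * Real.sinh (ν * t)) with hFdef
  set F' : ℝ → ℝ := fun t =>
    2 * (Real.sinh t * (Real.exp (-x * Real.cosh t) * Real.sinh (ν * t)))
      - (2*ν/x) * (Real.exp (-x * Real.cosh t) * Real.cosh (ν * t)) with hF'def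
  have hderiv : ∀ t : ℝ, HasDerivAt F (F' t) t := by
    intro t
    have h1 : HasDerivAt (fun t : ℝ => -x * Real.cosh t) (-x * Real.sinh t) t :=
      (Real.hasDerivAt_cosh t).const_mul (-x)
    have h2 : HasDerivAt (fun t : ℝ => Real.sinh (ν * t)) (Real.cosh (ν * t) * ν) t := by
      have := (Real.hasDerivAt_sinh (ν * t)).comp t ((hasDerivAt_id t).const_mul ν)
      simpa [Function.comp_def] using this
    have := ((h1.exp).mul h2).const_mul (-2/x)
    refine this.congr_deriv ?_
    simp only [hF'def]
    field_simp
    ring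
  have hF'int : IntegrableOn F' (Set.Ioi 0) := by
    apply Integrable.sub ((integrable_K'' x ν hx).const_mul 2)
      ((integrable_K x ν hx).const_mul _)
  have htend : Tendsto F atTop (nhds 0) := by
    apply squeeze_zero_norm' (a := fun t => (2/x) * Real.exp (|ν| * t - x * Real.cosh t))
    · filter_upwards [eventually_ge_atTop (0:ℝ)] with t ht
      have h1 : 0 < Real.exp (-x * Real.cosh t) := Real.exp_pos _
      have habs : |Real.sinh (ν * t)| ≤ Real.cosh (ν * t) := by
        rw [Real.abs_sinh, ← Real.cosh_abs, Real.sinh_eq, Real.cosh_eq]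
        have := Real.exp_pos (-|ν * t|)
        linarith
      have hc : Real.cosh (ν * t) ≤ Real.exp (|ν| * t) := cosh_mul_le ν t ht
      have heq : ‖F t‖ = (2/x) * (Real.exp (-x * Real.cosh t) * |Real.sinh (ν * t)|) := by
        simp only [hFdef, norm_mul, Real.norm_eq_abs, abs_div, abs_neg,
          abs_of_pos (by norm_num : (0:ℝ) < 2), abs_of_pos hx, abs_of_pos h1]
      rw [heq]
      have hle : Real.exp (-x * Real.cosh t) * |Real.sinh (ν * t)|
          ≤ Real.exp (-x * Real.cosh t) * Real.exp (|ν| * t) :=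
        mul_le_mul_of_nonneg_left (habs.trans hc) h1.le
      have heq2 : Real.exp (|ν| * t - x * Real.cosh t)
          = Real.exp (-x * Real.cosh t) * Real.exp (|ν| * t) := by
        rw [← Real.exp_add]; ring_nf
      rw [heq2]
      have h2x : (0:ℝ) ≤ 2/x := by positivity
      exact mul_le_mul_of_nonneg_left hle h2x
    · have := (tendsto_exp_lin_cosh x |ν| hx).const_mul (2/x)
      simpa using this
  have hibp := MeasureTheory.integral_Ioi_of_hasDerivAt_of_tendsto
    (f := F) (f' := F') (a := 0) (Continuous.continuousWithinAt (by continuity)) (fun t ht => hderiv t) hF'int htend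
  have hF0 : F 0 = 0 := by simp [hFdef]
  rw [hF0, sub_zero] at hibp
  -- hibp : ∫ t in Ioi 0, F' t = 0
  have hsplit : (∫ t in Set.Ioi (0:ℝ), F' t)
      = 2 * (∫ t in Set.Ioi (0:ℝ), Real.sinh t * (Real.exp (-x * Real.cosh t) * Real.sinh (ν * t)))
        - (2*ν/x) * besselK ν x := by
    simp only [hF'def]
    rw [MeasureTheory.integral_sub ((integrable_K'' x ν hx).const_mul 2)
      ((integrable_K x ν hx).const_mul _), integral_const_mul, integral_const_mul]
    rfl
  have hkey : 2 * (∫ t in Set.Ioi (0:ℝ),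
      Real.sinh t * (Real.exp (-x * Real.cosh t) * Real.sinh (ν * t))) = (2*ν/x) * besselK ν x := by
    rw [hsplit] at hibp; linarith
  have hdiff : besselK (ν+1) x - besselK (ν-1) x
      = 2 * ∫ t in Set.Ioi (0:ℝ),
          Real.sinh t * (Real.exp (-x * Real.cosh t) * Real.sinh (ν * t)) := by
    simp only [besselK]
    rw [← MeasureTheory.integral_sub (integrable_K x (ν+1) hx) (integrable_K x (ν-1) hx),
      ← integral_const_mul]
    apply MeasureTheory.integral_congr_ae (ae_of_all _ fun t => ?_)
    have e1 : Real.cosh ((ν+1) * t) = Real.cosh (ν*t) * Real.cosh t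
        + Real.sinh (ν*t) * Real.sinh t := by
      rw [show (ν+1)*t = ν*t + t by ring, Real.cosh_add]
    have e2 : Real.cosh ((ν-1) * t) = Real.cosh (ν*t) * Real.cosh t
        - Real.sinh (ν*t) * Real.sinh t := by
      rw [show (ν-1)*t = ν*t - t by ring, Real.cosh_sub]
    rw [e1, e2]; ring
  rw [hdiff, hkey]

lemma hasDerivAt_rpow_mul_besselK (ν x : ℝ) (hx : 0 < x) :
    HasDerivAt (fun y : ℝ => y ^ ν * besselK ν y) (-(x ^ ν * besselK (ν-1) x)) x := by
  have h1 : HasDerivAt (fun y : ℝ => y ^ ν) (ν * x ^ (ν - 1)) x :=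
    Real.hasDerivAt_rpow_const (Or.inl hx.ne')
  have h2 := besselK_hasDerivAt ν x hx
  have h3 := h1.mul h2
  refine h3.congr_deriv ?_
  have hrec := besselK_recurrence ν x hx
  have hxν : x ^ (ν - 1) = x ^ ν / x := by
    rw [Real.rpow_sub hx, Real.rpow_one]
  rw [hxν]
  have hK1 : besselK (ν+1) x = besselK (ν-1) x + (2*ν/x) * besselK ν x := by linarith
  rw [hK1]
  field_simp
  ring

lemma coef_identity (κ φ μ : ℝ) (hκ : 0 < κ) (hμ : 0 < μ) :
    (2:ℝ) ^ (1 - μ) * φ ^ 2 / (4 * π * Real.Gamma (μ + 1) * κ ^ (2 * μ)) * κ ^ 2 * (2 * μ)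
      = 2 ^ (1 - (μ-1)) * φ ^ 2 / (4 * π * Real.Gamma ((μ-1) + 1) * κ ^ (2 * (μ-1))) := by
  have hG : Real.Gamma (μ + 1) = μ * Real.Gamma μ := Real.Gamma_add_one hμ.ne'
  have hG2 : (μ - 1) + 1 = μ := by ring
  have h2 : (2:ℝ) ^ (1 - (μ-1)) = 2 ^ (1-μ) * 2 := by
    rw [show (1 - (μ-1)) = (1-μ) + 1 by ring, Real.rpow_add (by norm_num), Real.rpow_one]
  have hκ2 : κ ^ (2 * (μ-1)) = κ ^ (2*μ) / κ ^ 2 := by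
    rw [show (2 * (μ-1)) = 2*μ - 2 by ring, Real.rpow_sub hκ]
    norm_num [Real.rpow_natCast κ 2]
  have hGpos : 0 < Real.Gamma μ := Real.Gamma_pos_of_pos hμ
  have hκν : (0:ℝ) < κ ^ (2*μ) := Real.rpow_pos_of_pos hκ _
  rw [hG2, hG, h2, hκ2]
  field_simp


lemma hasFDerivAt_matern (κ φ μ : ℝ) (hκ : 0 < κ) (hμ : 0 < μ) (h : E2) (hh : h ≠ 0) :
    HasFDerivAt (matern κ φ μ)
      ((-(2*μ)⁻¹ * matern κ φ (μ-1) h) • (innerSL ℝ h : E2 →L[ℝ] ℝ)) h := by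
  have hr : 0 < ‖h‖ := norm_pos_iff.2 hh
  set r := ‖h‖ with hrdef
  set c : ℝ → ℝ := fun ν => 2 ^ (1 - ν) * φ ^ 2 / (4 * π * Real.Gamma (ν + 1) * κ ^ (2 * ν))
    with hcdef
  -- scalar chain
  have hsq : HasDerivAt Real.sqrt (1/(2*Real.sqrt (r^2))) (r^2) :=
    Real.hasDerivAt_sqrt (by positivity)
  have hg := hasDerivAt_rpow_mul_besselK μ (κ*r) (by positivity)
  have hmul : HasDerivAt (fun u : ℝ => κ * u) κ r := by
    simpa using (hasDerivAt_id r).const_mul κ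
  have hκr : HasDerivAt (fun u : ℝ => (κ*u)^μ * besselK μ (κ*u))
      (-( (κ*r)^μ * besselK (μ-1) (κ*r)) * κ) r := hg.comp r hmul
  have hκr' : HasDerivAt (fun u : ℝ => (κ*u)^μ * besselK μ (κ*u))
      (-( (κ*r)^μ * besselK (μ-1) (κ*r)) * κ) (Real.sqrt (r^2)) := by
    rwa [Real.sqrt_sq hr.le]
  have hψ0 : HasDerivAt (fun u : ℝ => (κ*Real.sqrt u)^μ * besselK μ (κ*Real.sqrt u))
      (-( (κ*r)^μ * besselK (μ-1) (κ*r)) * κ * (1/(2*Real.sqrt (r^2)))) (r^2) :=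
    hκr'.comp (r^2) hsq
  have hψ : HasDerivAt
      (fun u : ℝ => c μ * ((κ*Real.sqrt u)^μ * besselK μ (κ*Real.sqrt u)))
      (c μ * (-( (κ*r)^μ * besselK (μ-1) (κ*r)) * κ * (1/(2*Real.sqrt (r^2))))) (r^2) :=
    hψ0.const_mul _
  have A1 : HasFDerivAt (fun x : E2 => ‖x‖^2) ((2:ℕ) • (innerSL ℝ h : E2 →L[ℝ] ℝ)) h :=
    (hasStrictFDerivAt_norm_sq h).hasFDerivAt
  have H := hψ.comp_hasFDerivAt h A1
  have hfun : ((fun u : ℝ => c μ * ((κ*Real.sqrt u)^μ * besselK μ (κ*Real.sqrt u)))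
        ∘ (fun x : E2 => ‖x‖^2))
      = matern κ φ μ := by
    funext x
    simp only [Function.comp_apply]
    rw [Real.sqrt_sq (norm_nonneg x)]
    simp only [matern, hcdef]
    ring
  rw [hfun] at H
  refine H.congr_fderiv ?_
  -- equality of the two continuous linear maps
  ext v
  rw [Real.sqrt_sq hr.le]
  simp only [ContinuousLinearMap.coe_smul', Pi.smul_apply, smul_eq_mul,
    ContinuousLinearMap.smul_apply, nsmul_eq_mul, Nat.cast_ofNat]
  set w : ℝ := (innerSL ℝ h : E2 →L[ℝ] ℝ) v with hw
  set A : ℝ := (κ*r)^(μ-1) with hA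
  set K : ℝ := besselK (μ-1) (κ*r) with hK
  have hkey : c μ * (-( (κ*r)^μ * K) * κ * (1/(2*r))) * 2
      = -(2*μ)⁻¹ * matern κ φ (μ-1) h := by
    have hpow : (κ*r)^μ = A * (κ*r) := by
      rw [hA, ← Real.rpow_add_one (by positivity : (κ*r) ≠ 0)]
      norm_num
    have hc2 : c μ * κ^2 = (2*μ)⁻¹ * c (μ-1) := by
      have hco : c μ * κ^2 * (2*μ) = c (μ-1) := coef_identity κ φ μ hκ hμ
      have h2μ : (2*μ) ≠ 0 := by positivity
      rw [← hco]
      field_simp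
    have hMr : matern κ φ (μ-1) h = c (μ-1) * A * K := by
      simp only [matern, hcdef, hA, hK, hrdef]
    rw [hMr, hpow]
    have e1 : c μ * (-(A*(κ*r)*K) * κ * (1/(2*r))) * 2 = -((c μ * κ^2) * (A*K)) := by
      field_simp
    rw [e1, hc2]
    ring
  linear_combination w * hkey

lemma hasFDerivAt_coord (h : E2) :
    HasFDerivAt (fun x : E2 => x 0)
      (innerSL ℝ ((EuclideanSpace.single 0 (1:ℝ)) : E2) : E2 →L[ℝ] ℝ) h := by
  have hfun : (fun x : E2 => ((innerSL ℝ ((EuclideanSpace.single 0 (1:ℝ)) : E2)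
      : E2 →L[ℝ] ℝ) x)) = fun x : E2 => x 0 := by
    funext x
    simp [EuclideanSpace.inner_single_left]
  have := (innerSL ℝ ((EuclideanSpace.single 0 (1:ℝ)) : E2) : E2 →L[ℝ] ℝ).hasFDerivAt (x := h)
  exact this.congr_of_eventuallyEq (Filter.Eventually.of_forall fun x => by
    simp [EuclideanSpace.inner_single_left])

lemma hasFDerivAt_term (κ φ : ℝ) (hκ : 0 < κ) (k : ℕ) (μ : ℝ) (hμ : 0 < μ)
    (h : E2) (hh : h ≠ 0) :
    HasFDerivAt (fun x : E2 => (x 0)^k * matern κ φ μ x)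
      (((h 0)^k) • ((-(2*μ)⁻¹ * matern κ φ (μ-1) h) • (innerSL ℝ h : E2 →L[ℝ] ℝ))
        + (matern κ φ μ h) • (((k : ℝ) * (h 0)^(k-1)) •
            (innerSL ℝ ((EuclideanSpace.single 0 (1:ℝ)) : E2) : E2 →L[ℝ] ℝ))) h := by
  have hpowk : HasFDerivAt (fun x : E2 => (x 0)^k)
      (((k : ℝ) * (h 0)^(k-1)) •
        (innerSL ℝ ((EuclideanSpace.single 0 (1:ℝ)) : E2) : E2 →L[ℝ] ℝ)) h :=
    (hasDerivAt_pow k (h 0)).comp_hasFDerivAt h (hasFDerivAt_coord h)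
  exact hpowk.mul (hasFDerivAt_matern κ φ μ hκ hμ h hh)

lemma pderiv_term (κ φ : ℝ) (hκ : 0 < κ) (c : ℝ) (k : ℕ) (μ : ℝ) (hμ : 0 < μ)
    (x : E2) (hx : x ≠ 0) :
    pderiv2 0 (fun y : E2 => c * ((y 0)^k * matern κ φ μ y)) x
      = c * ((k : ℝ) * (x 0)^(k-1) * matern κ φ μ x
          - (2*μ)⁻¹ * (x 0)^(k+1) * matern κ φ (μ-1) x) := by
  have T := (hasFDerivAt_term κ φ hκ k μ hμ x hx).const_mul c
  rw [pderiv2, T.fderiv]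
  simp only [ContinuousLinearMap.coe_smul', Pi.smul_apply, ContinuousLinearMap.add_apply,
    ContinuousLinearMap.smul_apply, smul_eq_mul, innerSL_apply_apply,
    EuclideanSpace.inner_single_right, EuclideanSpace.inner_single_left,
    EuclideanSpace.single_apply, RCLike.inner_apply, starRingEnd_apply]
  simp only [star_trivial, if_true, mul_one, one_mul]
  ring

lemma pderiv_term2 (κ φ : ℝ) (hκ : 0 < κ) (c₁ c₂ : ℝ) (k₁ k₂ : ℕ) (μ₁ μ₂ : ℝ)
    (hμ₁ : 0 < μ₁) (hμ₂ : 0 < μ₂) (x : E2) (hx : x ≠ 0) :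
    pderiv2 0 (fun y : E2 => c₁ * ((y 0)^k₁ * matern κ φ μ₁ y)
        + c₂ * ((y 0)^k₂ * matern κ φ μ₂ y)) x
      = c₁ * ((k₁ : ℝ) * (x 0)^(k₁-1) * matern κ φ μ₁ x
            - (2*μ₁)⁻¹ * (x 0)^(k₁+1) * matern κ φ (μ₁-1) x)
        + c₂ * ((k₂ : ℝ) * (x 0)^(k₂-1) * matern κ φ μ₂ x
            - (2*μ₂)⁻¹ * (x 0)^(k₂+1) * matern κ φ (μ₂-1) x) := by
  have T := ((hasFDerivAt_term κ φ hκ k₁ μ₁ hμ₁ x hx).const_mul c₁).add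
    ((hasFDerivAt_term κ φ hκ k₂ μ₂ hμ₂ x hx).const_mul c₂)
  rw [pderiv2, HasFDerivAt.fderiv (f := fun y : E2 => c₁ * ((y 0)^k₁ * matern κ φ μ₁ y)
    + c₂ * ((y 0)^k₂ * matern κ φ μ₂ y)) T]
  simp only [ContinuousLinearMap.coe_smul', Pi.smul_apply, ContinuousLinearMap.add_apply,
    ContinuousLinearMap.smul_apply, smul_eq_mul, innerSL_apply_apply,
    EuclideanSpace.inner_single_right, EuclideanSpace.inner_single_left,
    EuclideanSpace.single_apply, RCLike.inner_apply, starRingEnd_apply]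
  simp only [star_trivial, if_true, mul_one, one_mul]
  ring

/-- Example 3 with `b₁ = b₂ = 0`, `B₁ = B₂ = (1,0)^⊤`: the fourth partial derivative of the
Matérn covariance with respect to the first coordinate is
`∂⁴C_κ^ν/∂h₁⁴(h) = 3γ₂ C_κ^{ν−2}(h) − 6γ₃ h₁² C_κ^{ν−3}(h) + γ₄ h₁⁴ C_κ^{ν−4}(h)`,
where `γ_k = (2^k ∏_{i=0}^{k−1}(ν−i))⁻¹`. -/
theorem matern_fourth_partial (κ φ ν : ℝ) (hκ : 0 < κ) (hφ : 0 < φ) (hν : 4 < ν)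
    (h : EuclideanSpace ℝ (Fin 2)) (hh : h ≠ 0) :
    (pderiv2 0)^[4] (matern κ φ ν) h
      = 3 * (2 ^ 2 * ∏ i ∈ Finset.range 2, (ν - i))⁻¹ * matern κ φ (ν - 2) h
        - 6 * (2 ^ 3 * ∏ i ∈ Finset.range 3, (ν - i))⁻¹ * h 0 ^ 2 * matern κ φ (ν - 3) h
        + (2 ^ 4 * ∏ i ∈ Finset.range 4, (ν - i))⁻¹ * h 0 ^ 4 * matern κ φ (ν - 4) h := by
  have hν0 : (0:ℝ) < ν := by linarith
  have hν1 : (0:ℝ) < ν - 1 := by linarith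
  have hν2 : (0:ℝ) < ν - 2 := by linarith
  have hν3 : (0:ℝ) < ν - 3 := by linarith
  set D1 : E2 → ℝ := fun x => -(2*ν)⁻¹ * ((x 0)^1 * matern κ φ (ν-1) x) with hD1
  set D2 : E2 → ℝ := fun x => -(2*ν)⁻¹ * ((x 0)^0 * matern κ φ (ν-1) x)
      + (2^2*(ν*(ν-1)))⁻¹ * ((x 0)^2 * matern κ φ (ν-2) x) with hD2
  set D3 : E2 → ℝ := fun x => (3*(2^2*(ν*(ν-1)))⁻¹) * ((x 0)^1 * matern κ φ (ν-2) x)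
      + (-(2^3*(ν*(ν-1)*(ν-2)))⁻¹) * ((x 0)^3 * matern κ φ (ν-3) x) with hD3
  have s1 : ∀ x : E2, x ≠ 0 → pderiv2 0 (matern κ φ ν) x = D1 x := by
    intro x hx
    rw [pderiv2, (hasFDerivAt_matern κ φ ν hκ hν0 x hx).fderiv]
    simp only [ContinuousLinearMap.coe_smul', Pi.smul_apply, smul_eq_mul, innerSL_apply_apply,
      EuclideanSpace.inner_single_right, RCLike.inner_apply, starRingEnd_apply, hD1]
    simp only [star_trivial, mul_one, one_mul, pow_one]
    ring
  have s2 : ∀ x : E2, x ≠ 0 → pderiv2 0 D1 x = D2 x := by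
    intro x hx
    rw [hD1]
    rw [pderiv_term κ φ hκ (-(2*ν)⁻¹) 1 (ν-1) hν1 x hx]
    simp only [hD2]
    have e : (ν - 1 - 1) = ν - 2 := by ring
    rw [e]
    field_simp
    ring
  have s3 : ∀ x : E2, x ≠ 0 → pderiv2 0 D2 x = D3 x := by
    intro x hx
    rw [hD2]
    rw [pderiv_term2 κ φ hκ _ _ 0 2 (ν-1) (ν-2) hν1 hν2 x hx]
    simp only [hD3]
    have e1 : (ν - 1 - 1) = ν - 2 := by ring
    have e2 : (ν - 2 - 1) = ν - 3 := by ring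
    rw [e1, e2]
    norm_num
    field_simp
    ring
  have s4 : ∀ x : E2, x ≠ 0 → pderiv2 0 D3 x
      = 3 * (2 ^ 2 * ∏ i ∈ Finset.range 2, (ν - i))⁻¹ * matern κ φ (ν - 2) x
        - 6 * (2 ^ 3 * ∏ i ∈ Finset.range 3, (ν - i))⁻¹ * x 0 ^ 2 * matern κ φ (ν - 3) x
        + (2 ^ 4 * ∏ i ∈ Finset.range 4, (ν - i))⁻¹ * x 0 ^ 4 * matern κ φ (ν - 4) x := by
    intro x hx
    rw [hD3]
    rw [pderiv_term2 κ φ hκ _ _ 1 3 (ν-2) (ν-3) hν2 hν3 x hx]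
    have e1 : (ν - 2 - 1) = ν - 3 := by ring
    have e2 : (ν - 3 - 1) = ν - 4 := by ring
    rw [e1, e2]
    simp only [Finset.prod_range_succ, Finset.prod_range_one]
    push_cast
    norm_num
    field_simp
    ring
  -- iterate
  have ev : ∀ (f g : E2 → ℝ), (∀ y : E2, y ≠ 0 → f y = g y) → ∀ x : E2, x ≠ 0 →
      pderiv2 0 f x = pderiv2 0 g x := by
    intro f g hfg x hx
    have hev : f =ᶠ[nhds x] g := by
      filter_upwards [eventually_ne_nhds hx] with y hy using hfg y hy
    simp only [pderiv2, hev.fderiv_eq]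
  have it1 : ∀ x : E2, x ≠ 0 → (pderiv2 0)^[1] (matern κ φ ν) x = D1 x := by
    intro x hx; simpa using s1 x hx
  have it2 : ∀ x : E2, x ≠ 0 → (pderiv2 0)^[2] (matern κ φ ν) x = D2 x := by
    intro x hx
    rw [Function.iterate_succ_apply']
    rw [ev _ D1 it1 x hx]
    exact s2 x hx
  have it3 : ∀ x : E2, x ≠ 0 → (pderiv2 0)^[3] (matern κ φ ν) x = D3 x := by
    intro x hx
    rw [Function.iterate_succ_apply']
    rw [ev _ D2 it2 x hx]
    exact s3 x hx
  rw [Function.iterate_succ_apply']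
  rw [ev _ D3 it3 h hh]
  exact s4 h hh
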